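/- Let Z be a symmetric irreducible random walk on ℤ with finite second moment. Then 2^r · P^k(Z(τ_{I_{k,r}^c}) > 3k2^r/2) → 0 as k2^r → ∞; in particular, for every ε > 0 there are only finitely many pairs (k,r) of positive integers with 2^r P^k(Z(τ_{I_{k,r}^c}) > 3k2^r/2) ≥ ε. -/

import Mathlib

open MeasureTheory ProbabilityTheory Finset Filter

/-- Discrete-time random walk on ℤ started at `x`, built from the step sequence `ξ`. -/
def walk {Ω : Type*} (ξ : ℕ → Ω → ℤ) (x : ℤ) (ω : Ω) (n : ℕ) : ℤ :=
  x + ∑ i ∈ Finset.range n, ξ i ω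

noncomputable def psi (p : ℤ → ℝ) (L : ℤ) : ℕ → ℤ → ℤ → ℝ
  | 0, x, y => if x = y ∧ x ∈ Finset.Ioo (0:ℤ) L then 1 else 0
  | n+1, x, y => if y ∈ Finset.Ioo (0:ℤ) L then
      ∑ z ∈ Finset.Ioo (0:ℤ) L, psi p L n x z * p (y - z) else 0

section PsiBasic

variable {p : ℤ → ℝ} {L : ℤ}

lemma psi_zero_def (p : ℤ → ℝ) (L x y : ℤ) :
    psi p L 0 x y = if x = y ∧ x ∈ Finset.Ioo (0:ℤ) L then 1 else 0 := rfl

lemma psi_succ_def (p : ℤ → ℝ) (L : ℤ) (n : ℕ) (x y : ℤ) :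
    psi p L (n+1) x y = if y ∈ Finset.Ioo (0:ℤ) L then
      ∑ z ∈ Finset.Ioo (0:ℤ) L, psi p L n x z * p (y - z) else 0 := rfl

lemma psi_nonneg (hp0 : ∀ z, 0 ≤ p z) : ∀ n x y, 0 ≤ psi p L n x y := by
  intro n
  induction n with
  | zero => intro x y; rw [psi_zero_def]; split <;> norm_num
  | succ n ih =>
    intro x y; rw [psi_succ_def]; split
    · exact Finset.sum_nonneg fun z _ => mul_nonneg (ih x z) (hp0 _)
    · exact le_refl _

lemma psi_zero_right : ∀ n x y, y ∉ Finset.Ioo (0:ℤ) L → psi p L n x y = 0 := by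
  intro n x y hy
  cases n with
  | zero =>
    rw [psi_zero_def, if_neg]; rintro ⟨rfl, hx⟩; exact hy hx
  | succ n => rw [psi_succ_def, if_neg hy]

lemma psi_left_rec : ∀ n x y, psi p L (n+1) x y =
    if x ∈ Finset.Ioo (0:ℤ) L then
      ∑ z ∈ Finset.Ioo (0:ℤ) L, p (z - x) * psi p L n z y else 0 := by
  intro n
  induction n with
  | zero =>
    intro x y
    by_cases hx : x ∈ Finset.Ioo (0:ℤ) L <;> by_cases hy : y ∈ Finset.Ioo (0:ℤ) L
    · rw [if_pos hx, psi_succ_def, if_pos hy]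
      rw [Finset.sum_eq_single x (fun z _ hzx => by
            rw [psi_zero_def, if_neg, zero_mul]; rintro ⟨rfl, _⟩; exact hzx rfl)
          (fun hxm => absurd hx hxm)]
      rw [Finset.sum_eq_single y (fun z _ hzy => by
            rw [psi_zero_def, if_neg, mul_zero]; rintro ⟨h1, _⟩; exact hzy h1)
          (fun hym => absurd hy hym)]
      rw [psi_zero_def, if_pos ⟨rfl, hx⟩, psi_zero_def, if_pos ⟨rfl, hy⟩, one_mul, mul_one]
    · rw [if_pos hx, psi_succ_def, if_neg hy]
      symm
      exact Finset.sum_eq_zero fun z _ => by rw [psi_zero_right 0 z y hy, mul_zero]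
    · rw [if_neg hx, psi_succ_def, if_pos hy]
      exact Finset.sum_eq_zero fun z _ => by
        rw [psi_zero_def, if_neg, zero_mul]; rintro ⟨rfl, hxm⟩; exact hx hxm
    · rw [if_neg hx]; exact psi_zero_right 1 x y hy
  | succ n ih =>
    intro x y
    by_cases hx : x ∈ Finset.Ioo (0:ℤ) L
    · rw [if_pos hx, psi_succ_def]
      by_cases hy : y ∈ Finset.Ioo (0:ℤ) L
      · rw [if_pos hy]
        calc ∑ z ∈ Finset.Ioo (0:ℤ) L, psi p L (n+1) x z * p (y - z)
            = ∑ z ∈ Finset.Ioo (0:ℤ) L, ∑ w ∈ Finset.Ioo (0:ℤ) L,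
                p (w - x) * psi p L n w z * p (y - z) := by
              refine Finset.sum_congr rfl fun z hz => ?_
              rw [ih x z, if_pos hx, Finset.sum_mul]
          _ = ∑ w ∈ Finset.Ioo (0:ℤ) L, ∑ z ∈ Finset.Ioo (0:ℤ) L,
                p (w - x) * psi p L n w z * p (y - z) := Finset.sum_comm
          _ = ∑ w ∈ Finset.Ioo (0:ℤ) L, p (w - x) * psi p L (n+1) w y := by
              refine Finset.sum_congr rfl fun w hw => ?_
              rw [psi_succ_def, if_pos hy, Finset.mul_sum]
              exact Finset.sum_congr rfl fun z hz => by ring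
      · rw [if_neg hy]
        symm
        exact Finset.sum_eq_zero fun z _ => by rw [psi_zero_right (n+1) z y hy, mul_zero]
    · rw [if_neg hx, psi_succ_def]
      split
      · exact Finset.sum_eq_zero fun z _ => by rw [ih x z, if_neg hx, zero_mul]
      · rfl

lemma psi_symm (hsymm : ∀ z, p (-z) = p z) : ∀ n x y, x ∈ Finset.Ioo (0:ℤ) L →
    y ∈ Finset.Ioo (0:ℤ) L → psi p L n x y = psi p L n y x := by
  intro n
  induction n with
  | zero =>
    intro x y hx hy
    rw [psi_zero_def, psi_zero_def]
    by_cases hxy : x = y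
    · subst hxy; rfl
    · rw [if_neg (by rintro ⟨h,_⟩; exact hxy h), if_neg (by rintro ⟨h,_⟩; exact hxy h.symm)]
  | succ n ih =>
    intro x y hx hy
    rw [psi_left_rec n y x, if_pos hy, psi_succ_def, if_pos hy]
    refine Finset.sum_congr rfl fun z hz => ?_
    rw [ih x z hx hz]
    have : p (y - z) = p (z - y) := by rw [← hsymm (z - y)]; ring_nf
    rw [this, mul_comm]

end PsiBasic

section Ule

variable {p : ℤ → ℝ} {L : ℤ}

lemma sum_p_shift_le_one (hp0 : ∀ z, 0 ≤ p z) (hsum : Summable p) (htsum : ∑' z, p z = 1)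
    (F : Finset ℤ) (c : ℤ) : ∑ z ∈ F, p (z - c) ≤ 1 := by
  have h1 : ∑ z ∈ F, p (z - c) = ∑ w ∈ F.image (fun z => z - c), p w := by
    rw [Finset.sum_image (fun a _ b _ h => by omega)]
  rw [h1, ← htsum]
  exact Summable.sum_le_tsum _ (fun z _ => hp0 z) hsum

lemma u_le_s (hp0 : ∀ z, 0 ≤ p z) (hsum : Summable p) (htsum : ∑' z, p z = 1) (k : ℤ) :
    ∀ N, ∀ y ∈ Finset.Ioo (0:ℤ) L,
      (∑ n ∈ Finset.range N, psi p L n y k) ≤ ∑ n ∈ Finset.range N, psi p L n k k := by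
  intro N
  induction N with
  | zero => intro y _; simp
  | succ N ih =>
    intro y hy
    by_cases hyk : y = k
    · subst hyk; exact le_refl _
    · have hsN : (0:ℝ) ≤ ∑ n ∈ Finset.range N, psi p L n k k :=
        Finset.sum_nonneg fun n _ => psi_nonneg hp0 n k k
      calc ∑ n ∈ Finset.range (N+1), psi p L n y k
          = (∑ n ∈ Finset.range N, psi p L (n+1) y k) + psi p L 0 y k :=
            Finset.sum_range_succ' _ N
        _ = ∑ n ∈ Finset.range N, psi p L (n+1) y k := by
            rw [psi_zero_def, if_neg (by rintro ⟨h,_⟩; exact hyk h), add_zero]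
        _ = ∑ n ∈ Finset.range N, ∑ z ∈ Finset.Ioo (0:ℤ) L, p (z - y) * psi p L n z k := by
            refine Finset.sum_congr rfl fun n _ => ?_
            rw [psi_left_rec, if_pos hy]
        _ = ∑ z ∈ Finset.Ioo (0:ℤ) L, p (z - y) * ∑ n ∈ Finset.range N, psi p L n z k := by
            rw [Finset.sum_comm]
            exact Finset.sum_congr rfl fun z _ => by rw [Finset.mul_sum]
        _ ≤ ∑ z ∈ Finset.Ioo (0:ℤ) L, p (z - y) * ∑ n ∈ Finset.range N, psi p L n k k := by
            refine Finset.sum_le_sum fun z hz => ?_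
            exact mul_le_mul_of_nonneg_left (ih z hz) (hp0 _)
        _ = (∑ z ∈ Finset.Ioo (0:ℤ) L, p (z - y)) * ∑ n ∈ Finset.range N, psi p L n k k := by
            rw [Finset.sum_mul]
        _ ≤ 1 * ∑ n ∈ Finset.range N, psi p L n k k := by
            exact mul_le_mul_of_nonneg_right (sum_p_shift_le_one hp0 hsum htsum _ y) hsN
        _ = ∑ n ∈ Finset.range N, psi p L n k k := one_mul _
        _ ≤ ∑ n ∈ Finset.range (N+1), psi p L n k k := by
            rw [Finset.sum_range_succ]
            exact le_add_of_nonneg_right (psi_nonneg hp0 N k k)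

end Ule

section Energy

variable {p : ℤ → ℝ}

lemma energy_lb (hp0 : ∀ z, 0 ≤ p z) (hsymm : ∀ z, p (-z) = p z)
    (hsum : Summable p) (htsum : ∑' z, p z = 1)
    {a k L : ℤ} (ha : 0 < a) (hk : 0 < k) (hkL : k < L)
    (g : ℤ → ℝ) (hg : ∀ y, y ∉ Finset.Ioo (0:ℤ) L → g y = 0) :
    p a * g k ^ 2 ≤ 2 * (k:ℝ) *
      ((∑ y ∈ Finset.Ioo (0:ℤ) L, g y ^ 2) -
        ∑ y ∈ Finset.Ioo (0:ℤ) L, ∑ x ∈ Finset.Ioo (0:ℤ) L, g y * (g x * p (y - x))) := by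
  set F : Finset ℤ := Finset.Ioo (0:ℤ) L with hF
  set C1 : ℝ := ∑ y ∈ F, g y ^ 2 with hC1
  set q : ℤ → ℝ := fun z => ∑ y ∈ F, g y * g (y - z) with hq
  set Mg : ℝ := ∑ w ∈ F, |g w| with hMg
  have hL0 : (0:ℤ) < L := lt_trans hk hkL
  have habs : ∀ w, |g w| ≤ Mg := by
    intro w
    by_cases hw : w ∈ F
    · exact Finset.single_le_sum (fun i _ => abs_nonneg (g i)) hw
    · rw [hg w hw, abs_zero]
      exact Finset.sum_nonneg fun i _ => abs_nonneg (g i)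
  have hMg0 : 0 ≤ Mg := Finset.sum_nonneg fun i _ => abs_nonneg (g i)
  have hqb : ∀ z, |q z| ≤ Mg * Mg := by
    intro z
    calc |q z| ≤ ∑ y ∈ F, |g y * g (y - z)| := Finset.abs_sum_le_sum_abs _ _
      _ = ∑ y ∈ F, |g y| * |g (y - z)| := by
          exact Finset.sum_congr rfl fun y _ => abs_mul _ _
      _ ≤ ∑ y ∈ F, |g y| * Mg :=
          Finset.sum_le_sum fun y _ => mul_le_mul_of_nonneg_left (habs _) (abs_nonneg _)
      _ = Mg * Mg := by rw [← Finset.sum_mul]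
  have hsum_qp : Summable fun z => q z * p z := by
    apply Summable.of_norm_bounded (hsum.mul_left (Mg * Mg))
    intro z
    rw [Real.norm_eq_abs, abs_mul, abs_of_nonneg (hp0 z)]
    exact mul_le_mul_of_nonneg_right (hqb z) (hp0 z)
  have hsum_qnp : Summable fun z => q (-z) * p z := by
    apply Summable.of_norm_bounded (hsum.mul_left (Mg * Mg))
    intro z
    rw [Real.norm_eq_abs, abs_mul, abs_of_nonneg (hp0 z)]
    exact mul_le_mul_of_nonneg_right (hqb _) (hp0 z)
  -- double sum equals tsum of q z * p z
  have hinner : ∀ y, (∑ x ∈ F, g x * p (y - x)) = ∑' z, g (y - z) * p z := by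
    intro y
    rw [tsum_eq_sum (s := F.image (fun x => y - x)) (f := fun z => g (y - z) * p z)
        (by
          intro z hz
          have : g (y - z) = 0 := by
            apply hg
            intro hmem
            exact hz (Finset.mem_image.2 ⟨y - z, hmem, by ring⟩)
          simp only [this, zero_mul])]
    rw [Finset.sum_image (fun x _ x' _ h => by omega)]
    exact Finset.sum_congr rfl fun x _ => by ring_nf
  have hDS : (∑ y ∈ F, ∑ x ∈ F, g y * (g x * p (y - x))) = ∑' z, q z * p z := by
    have h1 : ∀ y ∈ F, (∑ x ∈ F, g y * (g x * p (y - x)))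
        = ∑' z, g y * (g (y - z) * p z) := by
      intro y _
      rw [← Finset.mul_sum, hinner y]
      exact tsum_mul_left.symm
    rw [Finset.sum_congr rfl h1]
    rw [← Summable.tsum_finsetSum (by
      intro y _
      apply summable_of_ne_finset_zero (s := F.image (fun x => y - x))
      intro z hz
      have : g (y - z) = 0 := by
        apply hg
        intro hmem
        exact hz (Finset.mem_image.2 ⟨y - z, hmem, by ring⟩)
      simp only [this, zero_mul, mul_zero])]
    apply tsum_congr
    intro z
    rw [hq]
    rw [Finset.sum_mul]
    exact Finset.sum_congr rfl fun y _ => by ring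
  have hC1t : C1 = ∑' z, C1 * p z := by rw [tsum_mul_left, htsum, mul_one]
  set E : ℝ := C1 - ∑ y ∈ F, ∑ x ∈ F, g y * (g x * p (y - x)) with hE
  have hE1 : E = ∑' z, (C1 - q z) * p z := by
    rw [hE, hDS]
    nth_rewrite 1 [hC1t]
    rw [← Summable.tsum_sub (hsum.mul_left C1) hsum_qp]
    exact tsum_congr fun z => by ring
  have hE2 : E = ∑' z, (C1 - q (-z)) * p z := by
    rw [hE1, ← (Equiv.neg ℤ).tsum_eq (fun z => (C1 - q z) * p z)]
    apply tsum_congr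
    intro z
    have : p (-z) = p z := hsymm z
    simp only [Equiv.neg_apply]
    rw [this]
  have hsum1 : Summable fun z => (C1 - q z) * p z := by
    have : (fun z => (C1 - q z) * p z) = fun z => C1 * p z - q z * p z := by
      funext z; ring
    rw [this]
    exact (hsum.mul_left C1).sub hsum_qp
  have hsum2 : Summable fun z => (C1 - q (-z)) * p z := by
    have : (fun z => (C1 - q (-z)) * p z) = fun z => C1 * p z - q (-z) * p z := by
      funext z; ring
    rw [this]
    exact (hsum.mul_left C1).sub hsum_qnp
  have h2E : 2 * E = ∑' z, ((2*C1 - q z - q (-z)) * p z) := by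
    have : 2 * E = E + E := by ring
    rw [this]
    nth_rewrite 1 [hE1]
    nth_rewrite 1 [hE2]
    rw [← Summable.tsum_add hsum1 hsum2]
    exact tsum_congr fun z => by ring
  set J : ℤ → Finset ℤ := fun z => Finset.Icc (-((L+k)*(1+|z|))) ((L+k)*(1+|z|)) with hJ
  set V : ℤ → ℝ := fun z => ∑ y ∈ J z, (g y - g (y - z))^2 with hV
  have hFJ : ∀ z, F ⊆ J z := by
    intro z y hy
    rw [hF, Finset.mem_Ioo] at hy
    rw [hJ, Finset.mem_Icc]
    constructor
    · nlinarith [abs_nonneg z]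
    · nlinarith [abs_nonneg z]
  have hFzJ : ∀ z, ∀ y ∈ F, y + z ∈ J z := by
    intro z y hy
    rw [hF, Finset.mem_Ioo] at hy
    rw [hJ, Finset.mem_Icc]
    constructor
    · nlinarith [neg_abs_le z, abs_nonneg z]
    · nlinarith [le_abs_self z, abs_nonneg z]
  have hVq : ∀ z, 2*C1 - q z - q (-z) = V z := by
    intro z
    have e1 : ∑ y ∈ J z, g y ^ 2 = C1 :=
      (Finset.sum_subset (hFJ z) (fun y _ hy => by rw [hg y hy]; ring)).symm
    have hsubim : F ⊆ (J z).image (fun y => y - z) := by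
      intro y hy
      exact Finset.mem_image.2 ⟨y + z, hFzJ z y hy, by ring⟩
    have him : ∑ w ∈ (J z).image (fun y => y - z), g w ^ 2 = ∑ y ∈ J z, g (y - z) ^ 2 :=
      Finset.sum_image (fun x _ x' _ h => by omega)
    have e2 : ∑ y ∈ J z, g (y - z) ^ 2 = C1 := by
      rw [← him]
      exact (Finset.sum_subset hsubim (fun y _ hy => by rw [hg y hy]; ring)).symm
    have e3 : ∑ y ∈ J z, g y * g (y - z) = q z :=
      (Finset.sum_subset (hFJ z) (fun y _ hy => by rw [hg y hy, zero_mul])).symm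
    have e4 : ∑ y ∈ J z, g y * g (y - z) = q (-z) := by
      have him2 : ∑ w ∈ (J z).image (fun y => y - z), g (w + z) * g w
          = ∑ y ∈ J z, g (y - z + z) * g (y - z) :=
        Finset.sum_image (fun x _ x' _ h => by omega)
      have h5 : ∑ y ∈ J z, g y * g (y - z)
          = ∑ w ∈ (J z).image (fun y => y - z), g (w + z) * g w := by
        rw [him2]
        exact Finset.sum_congr rfl fun y _ => by rw [sub_add_cancel]
      rw [h5, ← Finset.sum_subset hsubim (fun y _ hy => by rw [hg y hy, mul_zero])]
      rw [hq]
      exact Finset.sum_congr rfl fun y _ => by rw [sub_neg_eq_add, mul_comm]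
    have e5 : V z = ∑ y ∈ J z, g y ^ 2 + ∑ y ∈ J z, g (y - z) ^ 2
        - 2 * ∑ y ∈ J z, g y * g (y - z) := by
      show (∑ y ∈ J z, (g y - g (y - z))^2) = _
      rw [Finset.mul_sum, ← Finset.sum_add_distrib, ← Finset.sum_sub_distrib]
      exact Finset.sum_congr rfl fun y _ => by ring
    have e6 : (2:ℝ) * (∑ y ∈ J z, g y * g (y - z)) = q z + q (-z) := by
      rw [two_mul]
      nth_rewrite 1 [e3]
      nth_rewrite 1 [e4]
      rfl
    rw [e5, e1, e2, e6]
    ring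
  have hsum3 : Summable fun z => (2*C1 - q z - q (-z)) * p z := by
    have heq : (fun z => (2*C1 - q z - q (-z)) * p z)
        = fun z => (C1 - q z) * p z + (C1 - q (-z)) * p z := by funext z; ring
    rw [heq]
    exact hsum1.add hsum2
  have hsumV : Summable fun z => V z * p z := by
    apply Summable.congr hsum3
    intro z
    rw [hVq z]
  have hpaVa : p a * V a ≤ 2 * E := by
    have h6 : 2 * E = ∑' z, V z * p z := by
      rw [h2E]
      exact tsum_congr fun z => by rw [hVq z]
    rw [h6]
    have := Summable.le_tsum hsumV a (fun b _ => mul_nonneg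
      (Finset.sum_nonneg fun y _ => sq_nonneg _) (hp0 b))
    calc p a * V a = V a * p a := mul_comm _ _
      _ ≤ ∑' z, V z * p z := this
  -- path sum
  set m : ℕ := k.toNat with hmdef
  have hm : (m:ℤ) = k := Int.toNat_of_nonneg hk.le
  have ha1 : (1:ℤ) ≤ a := ha
  set d : ℕ → ℝ := fun j => g (k - (j:ℤ)*a) - g (k - ((j:ℤ)+1)*a) with hd
  have himg : ∑ j ∈ Finset.range m, d j ^ 2 ≤ V a := by
    have hinj : ∀ x ∈ Finset.range m, ∀ x' ∈ Finset.range m,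
        k - (x:ℤ)*a = k - (x':ℤ)*a → x = x' := by
      intro x _ x' _ h
      have h2 : (x:ℤ)*a = (x':ℤ)*a := by omega
      have h3 : (x:ℤ) = (x':ℤ) := mul_right_cancel₀ (ne_of_gt ha) h2
      exact_mod_cast h3
    have him3 : ∑ y ∈ (Finset.range m).image (fun j : ℕ => k - (j:ℤ)*a), (g y - g (y - a))^2
        = ∑ j ∈ Finset.range m, (g (k - (j:ℤ)*a) - g (k - (j:ℤ)*a - a))^2 :=
      Finset.sum_image hinj
    have h7 : ∑ j ∈ Finset.range m, d j ^ 2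
        = ∑ y ∈ (Finset.range m).image (fun j : ℕ => k - (j:ℤ)*a), (g y - g (y - a))^2 := by
      rw [him3]
      refine Finset.sum_congr rfl fun j _ => ?_
      have : k - (j:ℤ)*a - a = k - ((j:ℤ)+1)*a := by ring
      rw [this]
    show ∑ j ∈ Finset.range m, d j ^ 2 ≤ ∑ y ∈ J a, (g y - g (y - a))^2
    rw [h7]
    apply Finset.sum_le_sum_of_subset_of_nonneg
    · intro y hy
      obtain ⟨j, hj, rfl⟩ := Finset.mem_image.1 hy
      rw [Finset.mem_range] at hj
      have hj1 : (j:ℤ) ≤ k - 1 := by omega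
      have hj0 : (0:ℤ) ≤ (j:ℤ) := Int.natCast_nonneg j
      rw [Finset.mem_Icc]
      rw [abs_of_pos ha]
      constructor
      · nlinarith
      · nlinarith
    · intro y _ _
      exact sq_nonneg _
  have htel : ∑ j ∈ Finset.range m, d j = g k := by
    have h8 : ∑ j ∈ Finset.range m, d j
        = ∑ j ∈ Finset.range m, ((fun i : ℕ => g (k - (i:ℤ)*a)) j
            - (fun i : ℕ => g (k - (i:ℤ)*a)) (j+1)) := by
      refine Finset.sum_congr rfl fun j _ => ?_
      rw [hd]
      push_cast
      ring_nf
    rw [h8, Finset.sum_range_sub' (fun i : ℕ => g (k - (i:ℤ)*a)) m]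
    have h9 : g (k - ((0:ℕ):ℤ)*a) = g k := by norm_num
    have h10 : g (k - (m:ℤ)*a) = 0 := by
      apply hg
      rw [hF, Finset.mem_Ioo]
      rw [hm]
      intro hcon
      nlinarith [hcon.1]
    rw [h9, h10, sub_zero]
  have hcs : g k ^ 2 ≤ (m:ℝ) * ∑ j ∈ Finset.range m, d j ^ 2 := by
    have := Finset.sum_mul_sq_le_sq_mul_sq (Finset.range m) d (fun _ => (1:ℝ))
    simp only [mul_one, one_pow, Finset.sum_const, Finset.card_range, nsmul_eq_mul] at this
    rw [htel] at this
    calc g k ^ 2 ≤ (∑ j ∈ Finset.range m, d j ^ 2) * ((m:ℝ)) := by simpa using this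
      _ = (m:ℝ) * ∑ j ∈ Finset.range m, d j ^ 2 := mul_comm _ _
  have hmR : ((m:ℕ):ℝ) = ((k:ℤ):ℝ) := by exact_mod_cast congrArg (Int.cast : ℤ → ℝ) hm
  have hm0 : (0:ℝ) ≤ (m:ℝ) := Nat.cast_nonneg m
  calc p a * g k ^ 2 ≤ p a * ((m:ℝ) * V a) := by
        apply mul_le_mul_of_nonneg_left _ (hp0 a)
        calc g k ^ 2 ≤ (m:ℝ) * ∑ j ∈ Finset.range m, d j ^ 2 := hcs
          _ ≤ (m:ℝ) * V a := mul_le_mul_of_nonneg_left himg hm0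
    _ = (m:ℝ) * (p a * V a) := by ring
    _ ≤ (m:ℝ) * (2 * E) := mul_le_mul_of_nonneg_left hpaVa hm0
    _ = 2 * ((m:ℝ)) * E := by ring
    _ = 2 * (k:ℝ) * E := by rw [hmR]

end Energy

section Total

variable {p : ℤ → ℝ}

lemma total_bound (hp0 : ∀ z, 0 ≤ p z) (hsymm : ∀ z, p (-z) = p z)
    (hsum : Summable p) (htsum : ∑' z, p z = 1)
    {a k L : ℤ} (ha : 0 < a) (hpa : 0 < p a) (hk : 0 < k) (hkL : k < L) (N : ℕ) :
    p a * (∑ n ∈ Finset.range N, ∑ y ∈ Finset.Ioo (0:ℤ) L, psi p L n k y) ≤ 2 * (k:ℝ) * L := by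
  set F : Finset ℤ := Finset.Ioo (0:ℤ) L with hF
  set g : ℤ → ℝ := fun y => ∑ n ∈ Finset.range N, psi p L n k y with hg
  set s : ℝ := g k with hs
  have hL0 : (0:ℤ) < L := lt_trans hk hkL
  have hkI : k ∈ F := by rw [hF, Finset.mem_Ioo]; exact ⟨hk, hkL⟩
  have hgsupp : ∀ y, y ∉ F → g y = 0 := fun y hy =>
    Finset.sum_eq_zero fun n _ => psi_zero_right n k y hy
  have hgnn : ∀ y, 0 ≤ g y := fun y =>
    Finset.sum_nonneg fun n _ => psi_nonneg hp0 n k y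
  have hules : ∀ y ∈ F, g y ≤ s := by
    intro y hy
    have h1 : g y = ∑ n ∈ Finset.range N, psi p L n y k :=
      Finset.sum_congr rfl fun n _ => psi_symm hsymm n k y hkI hy
    rw [h1, hs]
    exact u_le_s hp0 hsum htsum k N y hy
  have hgrec : ∀ y ∈ F, ∑ x ∈ F, g x * p (y - x)
      = g y - psi p L 0 k y + psi p L N k y := by
    intro y hy
    have h1 : ∑ x ∈ F, g x * p (y - x)
        = ∑ n ∈ Finset.range N, ∑ x ∈ F, psi p L n k x * p (y - x) := by
      rw [Finset.sum_comm]
      exact Finset.sum_congr rfl fun x _ => by rw [hg, Finset.sum_mul]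
    have h2 : ∀ n, (∑ x ∈ F, psi p L n k x * p (y - x)) = psi p L (n+1) k y := by
      intro n
      rw [psi_succ_def, if_pos (by rw [← hF]; exact hy)]
    rw [h1, Finset.sum_congr rfl fun n _ => h2 n]
    have h3 : ∑ n ∈ Finset.range (N+1), psi p L n k y
        = (∑ n ∈ Finset.range N, psi p L (n+1) k y) + psi p L 0 k y :=
      Finset.sum_range_succ' _ N
    have h4 : ∑ n ∈ Finset.range (N+1), psi p L n k y = g y + psi p L N k y := by
      rw [Finset.sum_range_succ]
    rw [h4] at h3
    linarith [h3]
  have hE_le : (∑ y ∈ F, g y ^ 2) - (∑ y ∈ F, ∑ x ∈ F, g y * (g x * p (y - x))) ≤ s := by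
    have h1 : ∑ y ∈ F, ∑ x ∈ F, g y * (g x * p (y - x))
        = ∑ y ∈ F, g y * (g y - psi p L 0 k y + psi p L N k y) := by
      refine Finset.sum_congr rfl fun y hy => ?_
      rw [← Finset.mul_sum, hgrec y hy]
    rw [h1]
    have h2 : (∑ y ∈ F, g y ^ 2) - (∑ y ∈ F, g y * (g y - psi p L 0 k y + psi p L N k y))
        = (∑ y ∈ F, g y * psi p L 0 k y) - ∑ y ∈ F, g y * psi p L N k y := by
      rw [← Finset.sum_sub_distrib, ← Finset.sum_sub_distrib]
      exact Finset.sum_congr rfl fun y _ => by ring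
    rw [h2]
    have h3 : ∑ y ∈ F, g y * psi p L 0 k y = s := by
      rw [Finset.sum_eq_single k (fun y _ hyk => by
        rw [psi_zero_def, if_neg (by rintro ⟨h,_⟩; exact hyk h.symm), mul_zero])
        (fun hk' => absurd hkI hk')]
      rw [psi_zero_def, if_pos ⟨rfl, hkI⟩, mul_one]
    rw [h3]
    have h4 : 0 ≤ ∑ y ∈ F, g y * psi p L N k y :=
      Finset.sum_nonneg fun y _ => mul_nonneg (hgnn y) (psi_nonneg hp0 N k y)
    linarith
  have henergy := energy_lb hp0 hsymm hsum htsum ha hk hkL g hgsupp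
  have hs0 : 0 ≤ s := hgnn k
  have hk0 : (0:ℝ) < (k:ℝ) := by exact_mod_cast hk
  have hL0' : (0:ℝ) < (L:ℝ) := by exact_mod_cast hL0
  have hswap : (∑ n ∈ Finset.range N, ∑ y ∈ F, psi p L n k y) = ∑ y ∈ F, g y :=
    Finset.sum_comm
  rw [hswap]
  have hpas : p a * s ≤ 2 * (k:ℝ) := by
    rcases eq_or_lt_of_le hs0 with heq | hlt
    · rw [← heq, mul_zero]; positivity
    · have h5 : p a * s ^ 2 ≤ 2 * (k:ℝ) * s := le_trans henergy
        (mul_le_mul_of_nonneg_left hE_le (by positivity))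
      nlinarith
  have hsum_le : ∑ y ∈ F, g y ≤ ((L:ℝ) - 1) * s := by
    have hcard : ((F.card : ℝ)) = (L:ℝ) - 1 := by
      rw [hF, Int.card_Ioo]
      have : (L - 0 - 1).toNat = (L - 1).toNat := by norm_num
      rw [this]
      have h6 : ((L-1).toNat : ℤ) = L - 1 := Int.toNat_of_nonneg (by omega)
      have : (((L-1).toNat : ℤ) : ℝ) = ((L:ℝ) - 1) := by rw [h6]; push_cast; ring
      exact_mod_cast this
    calc ∑ y ∈ F, g y ≤ F.card • s := Finset.sum_le_card_nsmul F g s hules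
      _ = (F.card : ℝ) * s := nsmul_eq_mul _ _
      _ = ((L:ℝ) - 1) * s := by rw [hcard]
  calc p a * ∑ y ∈ F, g y ≤ p a * (((L:ℝ) - 1) * s) := by
        apply mul_le_mul_of_nonneg_left _ (hp0 a)
        exact hsum_le
    _ = ((L:ℝ) - 1) * (p a * s) := by ring
    _ ≤ ((L:ℝ) - 1) * (2 * (k:ℝ)) := by
        have hL1 : (1:ℝ) ≤ (L:ℝ) := by exact_mod_cast (by omega : (1:ℤ) ≤ L)
        apply mul_le_mul_of_nonneg_left hpas
        linarith
    _ ≤ 2 * (k:ℝ) * L := by nlinarith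

end Total

section Prob

variable {Ω : Type*} [MeasurableSpace Ω] (μ : Measure Ω) [IsProbabilityMeasure μ]

lemma measurableSet_all {α : Type*} [MeasurableSpace α] [Countable α]
    [MeasurableSingletonClass α] (s : Set α) : MeasurableSet s :=
  s.to_countable.measurableSet

lemma meas_preimage {p : ℤ → ℝ} (ξi : Ω → ℤ) (hξ : Measurable ξi)
    (hpt : ∀ z, (μ {ω | ξi ω = z}).toReal = p z) (s : Set ℤ) :
    μ (ξi ⁻¹' s) = ∑' (z : s), ENNReal.ofReal (p z) := by
  have hsingle : ∀ z : ℤ, μ (ξi ⁻¹' {z}) = ENNReal.ofReal (p z) := by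
    intro z
    have h1 : {ω | ξi ω = z} = ξi ⁻¹' {z} := rfl
    rw [← hpt z, h1, ENNReal.ofReal_toReal (measure_ne_top μ _)]
  have hdecomp : ξi ⁻¹' s = ⋃ (z : s), ξi ⁻¹' {(z:ℤ)} := by
    ext ω
    simp only [Set.mem_preimage, Set.mem_iUnion, Set.mem_singleton_iff]
    exact ⟨fun h => ⟨⟨ξi ω, h⟩, rfl⟩, fun ⟨z, hz⟩ => hz ▸ z.2⟩
  rw [hdecomp, measure_iUnion (fun i j hij => by
      apply Set.disjoint_left.2
      intro ω h1 h2
      simp only [Set.mem_preimage, Set.mem_singleton_iff] at h1 h2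
      exact hij (Subtype.ext (h1 ▸ h2 ▸ rfl)))
    (fun z => hξ (measurableSet_singleton _))]
  exact tsum_congr fun z => hsingle z

lemma walk_measurable (ξ : ℕ → Ω → ℤ) (hmeas : ∀ i, Measurable (ξ i)) (x : ℤ) (n : ℕ) :
    Measurable fun ω => walk ξ x ω n := by
  apply Measurable.add
  · exact measurable_const
  · exact Finset.measurable_sum _ fun i _ => hmeas i

lemma indep_factor (ξ : ℕ → Ω → ℤ) (hmeas : ∀ i, Measurable (ξ i))
    (hiid : iIndepFun ξ μ) (k L : ℤ) (n : ℕ) (y : ℤ) (s : Set ℤ) :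
    μ ({ω | (∀ m ≤ n, 0 < walk ξ k ω m ∧ walk ξ k ω m < L) ∧ walk ξ k ω n = y}
        ∩ (ξ n) ⁻¹' s)
      = μ {ω | (∀ m ≤ n, 0 < walk ξ k ω m ∧ walk ξ k ω m < L) ∧ walk ξ k ω n = y}
        * μ ((ξ n) ⁻¹' s) := by
  classical
  set S : Finset ℕ := Finset.range n with hS
  set T : Finset ℕ := {n} with hT
  have hST : Disjoint S T := by
    rw [hS, hT, Finset.disjoint_singleton_right, Finset.mem_range]
    omega
  have hIF := hiid.indepFun_finset S T hST hmeas
  set SA : Set ((i : S) → ℤ) := {v |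
    (∀ m ≤ n, 0 < k + ∑ i ∈ Finset.range m, (if h : i ∈ S then v ⟨i, h⟩ else 0) ∧
      k + ∑ i ∈ Finset.range m, (if h : i ∈ S then v ⟨i, h⟩ else 0) < L) ∧
    k + ∑ i ∈ Finset.range n, (if h : i ∈ S then v ⟨i, h⟩ else 0) = y} with hSA
  set SB : Set ((i : T) → ℤ) := {v | v ⟨n, by rw [hT]; exact Finset.mem_singleton_self n⟩ ∈ s}
    with hSB
  have hsum_eq : ∀ (ω : Ω), ∀ m ≤ n,
      (∑ i ∈ Finset.range m, (if h : i ∈ S then ξ i ω else 0)) =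
        ∑ i ∈ Finset.range m, ξ i ω := by
    intro ω m hm
    refine Finset.sum_congr rfl fun i hi => ?_
    rw [dif_pos]
    rw [hS, Finset.mem_range]
    rw [Finset.mem_range] at hi
    omega
  have hA : {ω | (∀ m ≤ n, 0 < walk ξ k ω m ∧ walk ξ k ω m < L) ∧ walk ξ k ω n = y}
      = (fun ω (i : S) => ξ i ω) ⁻¹' SA := by
    ext ω
    simp only [Set.mem_setOf_eq, Set.mem_preimage, hSA, walk]
    constructor
    · rintro ⟨h1, h2⟩
      refine ⟨fun m hm => by rw [hsum_eq ω m hm]; exact h1 m hm, by rw [hsum_eq ω n le_rfl]; exact h2⟩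
    · rintro ⟨h1, h2⟩
      refine ⟨fun m hm => ?_, ?_⟩
      · have := h1 m hm; rwa [hsum_eq ω m hm] at this
      · have := h2; rwa [hsum_eq ω n le_rfl] at this
  have hB : (ξ n) ⁻¹' s = (fun ω (i : T) => ξ i ω) ⁻¹' SB := rfl
  rw [hA, hB]
  exact hIF.measure_inter_preimage_eq_mul SA SB (measurableSet_all _) (measurableSet_all _)

end Prob

section Nu

variable {Ω : Type*} [MeasurableSpace Ω] (μ : Measure Ω) [IsProbabilityMeasure μ]

lemma measurable_event (ξ : ℕ → Ω → ℤ) (hmeas : ∀ i, Measurable (ξ i)) (k L : ℤ)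
    (n : ℕ) (x : ℤ) :
    MeasurableSet {ω | (∀ m ≤ n, 0 < walk ξ k ω m ∧ walk ξ k ω m < L)
      ∧ walk ξ k ω n = x} := by
  have hset : {ω | (∀ m ≤ n, 0 < walk ξ k ω m ∧ walk ξ k ω m < L) ∧ walk ξ k ω n = x}
      = (⋂ m ∈ Set.Iic n, (fun ω => walk ξ k ω m) ⁻¹' {z | 0 < z ∧ z < L})
        ∩ (fun ω => walk ξ k ω n) ⁻¹' {x} := by
    ext ω
    simp only [Set.mem_setOf_eq, Set.mem_inter_iff, Set.mem_iInter, Set.mem_preimage,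
      Set.mem_Iic, Set.mem_singleton_iff]
  rw [hset]
  exact MeasurableSet.inter
    (MeasurableSet.biInter (Set.to_countable _)
      (fun m _ => (walk_measurable ξ hmeas k m) (measurableSet_all _)))
    ((walk_measurable ξ hmeas k n) (measurableSet_all _))

lemma nu_eq {p : ℤ → ℝ} (hp0 : ∀ z, 0 ≤ p z) (ξ : ℕ → Ω → ℤ) (hmeas : ∀ i, Measurable (ξ i))
    (hiid : iIndepFun ξ μ)
    (hstep : ∀ i z, (μ {ω | ξ i ω = z}).toReal = p z)
    (k L : ℤ) (hk : 0 < k) (hkL : k < L) :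
    ∀ n y, μ {ω | (∀ m ≤ n, 0 < walk ξ k ω m ∧ walk ξ k ω m < L) ∧ walk ξ k ω n = y}
      = ENNReal.ofReal (psi p L n k y) := by
  have hsingle : ∀ i (z : ℤ), μ ((ξ i) ⁻¹' {z}) = ENNReal.ofReal (p z) := by
    intro i z
    have h1 : {ω | ξ i ω = z} = (ξ i) ⁻¹' {z} := rfl
    rw [← hstep i z, h1, ENNReal.ofReal_toReal (measure_ne_top μ _)]
  intro n
  induction n with
  | zero =>
    intro y
    have hw0 : ∀ ω, walk ξ k ω 0 = k := by
      intro ω; simp [walk]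
    by_cases hy : k = y
    · subst hy
      have huniv : {ω | (∀ m ≤ 0, 0 < walk ξ k ω m ∧ walk ξ k ω m < L)
          ∧ walk ξ k ω 0 = k} = Set.univ := by
        ext ω
        simp only [Set.mem_setOf_eq, Set.mem_univ, iff_true]
        refine ⟨fun m hm => ?_, hw0 ω⟩
        have : m = 0 := Nat.le_zero.mp hm
        subst this
        rw [hw0 ω]
        exact ⟨hk, hkL⟩
      rw [huniv, measure_univ, psi_zero_def,
        if_pos ⟨rfl, Finset.mem_Ioo.2 ⟨hk, hkL⟩⟩, ENNReal.ofReal_one]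
    · have hempty : {ω | (∀ m ≤ 0, 0 < walk ξ k ω m ∧ walk ξ k ω m < L)
          ∧ walk ξ k ω 0 = y} = ∅ := by
        ext ω
        simp only [Set.mem_setOf_eq, Set.mem_empty_iff_false, iff_false, not_and]
        intro _
        rw [hw0 ω]
        exact hy
      rw [hempty, measure_empty, psi_zero_def,
        if_neg (by rintro ⟨h, _⟩; exact hy h), ENNReal.ofReal_zero]
  | succ n ih =>
    intro y
    have hwsucc : ∀ ω, walk ξ k ω (n+1) = walk ξ k ω n + ξ n ω := by
      intro ω
      show k + _ = (k + _) + _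
      rw [Finset.sum_range_succ]
      ring
    by_cases hy : y ∈ Finset.Ioo (0:ℤ) L
    · have hdecomp : {ω | (∀ m ≤ n+1, 0 < walk ξ k ω m ∧ walk ξ k ω m < L)
          ∧ walk ξ k ω (n+1) = y}
          = ⋃ x ∈ (Finset.Ioo (0:ℤ) L : Finset ℤ),
            ({ω | (∀ m ≤ n, 0 < walk ξ k ω m ∧ walk ξ k ω m < L) ∧ walk ξ k ω n = x}
              ∩ (ξ n) ⁻¹' {y - x}) := by
        ext ω
        simp only [Set.mem_setOf_eq, Set.mem_iUnion, Set.mem_inter_iff, Set.mem_preimage,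
          Set.mem_singleton_iff, exists_prop]
        constructor
        · rintro ⟨h1, h2⟩
          refine ⟨walk ξ k ω n, ?_, ⟨fun m hm => h1 m (hm.trans (Nat.le_succ n)), rfl⟩, ?_⟩
          · have := h1 n (Nat.le_succ n)
            exact Finset.mem_Ioo.2 this
          · have := hwsucc ω
            omega
        · rintro ⟨x, hx, ⟨h1, h2⟩, h3⟩
          have hws : walk ξ k ω (n+1) = y := by
            rw [hwsucc ω, h2, h3]; ring
          refine ⟨fun m hm => ?_, hws⟩
          by_cases hmn : m ≤ n
          · exact h1 m hmn
          · have : m = n + 1 := by omega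
            subst this
            rw [hws]
            exact Finset.mem_Ioo.1 hy
      rw [hdecomp]
      rw [measure_biUnion_finset (by
          intro x hx x' hx' hxx'
          apply Set.disjoint_left.2
          intro ω h1 h2
          exact hxx' (h1.1.2 ▸ h2.1.2 ▸ rfl))
        (fun x _ => (measurable_event ξ hmeas k L n x).inter
          ((hmeas n) (measurableSet_all _)))]
      have hterm : ∀ x ∈ Finset.Ioo (0:ℤ) L,
          μ ({ω | (∀ m ≤ n, 0 < walk ξ k ω m ∧ walk ξ k ω m < L) ∧ walk ξ k ω n = x}
            ∩ (ξ n) ⁻¹' {y - x})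
          = ENNReal.ofReal (psi p L n k x * p (y - x)) := by
        intro x _
        rw [indep_factor μ ξ hmeas hiid k L n x {y-x}, ih x, hsingle n (y-x),
          ← ENNReal.ofReal_mul (psi_nonneg hp0 n k x)]
      rw [Finset.sum_congr rfl hterm, ← ENNReal.ofReal_sum_of_nonneg
        (fun x _ => mul_nonneg (psi_nonneg hp0 n k x) (hp0 _))]
      congr 1
      rw [psi_succ_def, if_pos hy]
    · have hempty : {ω | (∀ m ≤ n+1, 0 < walk ξ k ω m ∧ walk ξ k ω m < L)
          ∧ walk ξ k ω (n+1) = y} = ∅ := by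
        ext ω
        simp only [Set.mem_setOf_eq, Set.mem_empty_iff_false, iff_false, not_and]
        intro h1 h2
        exact hy (Finset.mem_Ioo.2 (h2 ▸ h1 (n+1) le_rfl))
      rw [hempty, measure_empty, psi_zero_right (n+1) k y hy, ENNReal.ofReal_zero]

end Nu

/-- `2^r P^k(Z(τ_{I_{k,r}^c}) > 3k2^r/2) → 0` as `k2^r → ∞`: for every
`ε > 0` only finitely many pairs `(k,r)` violate the bound. -/
theorem stmt7
    {Ω : Type*} [MeasurableSpace Ω] (μ : Measure Ω) [IsProbabilityMeasure μ]
    (p : ℤ → ℝ) (hp0 : ∀ z, 0 ≤ p z) (hp1 : HasSum p 1)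
    (hsymm : ∀ z, p (-z) = p z)
    (hirr : AddSubgroup.closure {z : ℤ | p z ≠ 0} = ⊤)
    (hmom : Summable fun z : ℤ => (z : ℝ) ^ 2 * p z)
    (ξ : ℕ → Ω → ℤ) (hmeas : ∀ i, Measurable (ξ i))
    (hiid : iIndepFun ξ μ)
    (hstep : ∀ i z, (μ {ω | ξ i ω = z}).toReal = p z) :
    ∀ ε : ℝ, 0 < ε →
      {q : ℕ × ℕ | 0 < q.1 ∧ 0 < q.2 ∧
        ε ≤ (2 : ℝ) ^ q.2 *
          (μ {ω | ∃ n : ℕ, 3 * (q.1 : ℤ) * 2 ^ q.2 < 2 * walk ξ (q.1 : ℤ) ω n ∧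
              ∀ m : ℕ, m < n → 0 < walk ξ (q.1 : ℤ) ω m ∧
                walk ξ (q.1 : ℤ) ω m < (q.1 : ℤ) * 2 ^ q.2}).toReal}.Finite := by
  intro ε hε
  have hsump : Summable p := hp1.summable
  have htsum : ∑' z, p z = 1 := hp1.tsum_eq
  -- an irreducibility step
  obtain ⟨a, ha, hpa⟩ : ∃ a : ℤ, 0 < a ∧ 0 < p a := by
    by_contra hcon
    push_neg at hcon
    have hzero : ∀ z : ℤ, z ≠ 0 → p z = 0 := by
      intro z hz
      rcases lt_or_gt_of_ne hz with h | h
      · have h2 : p (-z) = 0 := le_antisymm (hcon (-z) (by omega)) (hp0 _)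
        rw [← hsymm z]; exact h2
      · exact le_antisymm (hcon z h) (hp0 z)
    have hsub : {z : ℤ | p z ≠ 0} ⊆ {0} := by
      intro z hz
      by_contra hz0
      exact hz (hzero z hz0)
    have h1 : (1:ℤ) ∈ AddSubgroup.closure {z : ℤ | p z ≠ 0} := by
      rw [hirr]; trivial
    have h2 : AddSubgroup.closure {z : ℤ | p z ≠ 0} ≤ AddSubgroup.closure {0} :=
      AddSubgroup.closure_mono hsub
    have h3 : AddSubgroup.closure ({0} : Set ℤ) = ⊥ := by
      simp
    rw [h3] at h2
    have := h2 h1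
    rw [AddSubgroup.mem_bot] at this
    norm_num at this
  -- tail second-moment function
  set SS : ℤ → ℝ := fun Lz => ∑' (z : {w : ℤ | Lz < 2*w}), ((z:ℤ):ℝ)^2 * p z with hSS
  have hSS_nonneg : ∀ Lz, 0 ≤ SS Lz := fun Lz =>
    tsum_nonneg fun z => mul_nonneg (sq_nonneg _) (hp0 _)
  -- choose M
  have hδ : 0 < ε * p a / 8 := by positivity
  obtain ⟨F0, hF0⟩ : ∃ F0 : Finset ℤ,
      (∑' (x : {x : ℤ // x ∉ F0}), ((x:ℤ):ℝ)^2 * p x) < ε * p a / 8 := by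
    have htend := tendsto_tsum_compl_atTop_zero (fun z : ℤ => (z:ℝ)^2 * p z)
    have hev := (tendsto_order.1 htend).2 _ hδ
    exact hev.exists
  set M : ℕ := 2 * (F0.sup fun z => z.natAbs) + 1 with hM
  have hMbound : ∀ Lz : ℤ, (M:ℤ) ≤ Lz → SS Lz < ε * p a / 8 := by
    intro Lz hLz
    refine lt_of_le_of_lt ?_ hF0
    apply Summable.tsum_le_tsum_of_inj
      (fun w : {w : ℤ | Lz < 2*w} => (⟨(w:ℤ), by
        intro hmem
        have h1 : (w:ℤ).natAbs ≤ F0.sup (fun z => z.natAbs) := Finset.le_sup hmem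
        have h2 : Lz < 2 * (w:ℤ) := w.2
        have h3 : (w:ℤ) ≤ ((w:ℤ).natAbs : ℤ) := Int.le_natAbs
        omega⟩ : {x : ℤ // x ∉ F0}))
    · intro w w' hww'
      apply Subtype.ext
      simpa using congrArg Subtype.val hww'
    · intro c _
      exact mul_nonneg (sq_nonneg _) (hp0 _)
    · intro w
      exact le_refl _
    · exact hmom.subtype _
    · exact hmom.subtype _
  -- the main estimate
  have hmain : ∀ kk rr : ℕ, 0 < kk → 0 < rr →
      (2:ℝ)^rr * (μ {ω | ∃ n : ℕ, 3 * (kk:ℤ) * 2^rr < 2 * walk ξ (kk:ℤ) ω n ∧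
        ∀ m : ℕ, m < n → 0 < walk ξ (kk:ℤ) ω m ∧ walk ξ (kk:ℤ) ω m < (kk:ℤ) * 2^rr}).toReal
      ≤ 8 * SS ((kk:ℤ) * 2^rr) / p a := by
    intro kk rr hkk hrr
    set k : ℤ := (kk:ℤ) with hkdef
    set L : ℤ := k * 2^rr with hLdef
    have hk : 0 < k := by rw [hkdef]; exact_mod_cast hkk
    have h2r : (2:ℤ) ≤ 2^rr := by
      calc (2:ℤ) = 2^1 := (pow_one 2).symm
      _ ≤ 2^rr := pow_le_pow_right₀ one_le_two hrr
    have hkL : k < L := by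
      rw [hLdef]
      nlinarith
    have hL0 : (0:ℤ) < L := lt_trans hk hkL
    have hLreal : ((L:ℤ):ℝ) = (kk:ℝ) * 2^rr := by
      rw [hLdef, hkdef]; push_cast; ring
    have hLR0 : (0:ℝ) < (L:ℝ) := by exact_mod_cast hL0
    set sL : Set ℤ := {z : ℤ | L < 2*z} with hsL
    set τ : ENNReal := μ ((ξ 0) ⁻¹' sL) with hτ
    have hτn : ∀ n, μ ((ξ n) ⁻¹' sL) = τ := by
      intro n
      rw [hτ, meas_preimage μ (ξ 0) (hmeas 0) (hstep 0) sL,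
        meas_preimage μ (ξ n) (hmeas n) (hstep n) sL]
    set C : ℕ → Set Ω := fun n => {ω | 3 * k * 2^rr < 2 * walk ξ k ω n ∧
        ∀ m : ℕ, m < n → 0 < walk ξ k ω m ∧ walk ξ k ω m < L} with hC
    have hC0 : μ (C 0) = 0 := by
      have : C 0 = ∅ := by
        ext ω
        simp only [hC, Set.mem_setOf_eq, Set.mem_empty_iff_false, iff_false, not_and]
        intro hcon
        exfalso
        have hw0 : walk ξ k ω 0 = k := by simp [walk]
        rw [hw0] at hcon
        nlinarith
      rw [this, measure_empty]
    have hwsucc : ∀ ω n, walk ξ k ω (n+1) = walk ξ k ω n + ξ n ω := by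
      intro ω n
      show k + _ = (k + _) + _
      rw [Finset.sum_range_succ]
      ring
    have hCsucc : ∀ n, μ (C (n+1)) ≤
        ENNReal.ofReal (∑ y ∈ Finset.Ioo (0:ℤ) L, psi p L n k y) * τ := by
      intro n
      have hsubset : C (n+1) ⊆ ⋃ x ∈ (Finset.Ioo (0:ℤ) L : Finset ℤ),
          ({ω | (∀ m ≤ n, 0 < walk ξ k ω m ∧ walk ξ k ω m < L) ∧ walk ξ k ω n = x}
            ∩ (ξ n) ⁻¹' sL) := by
        intro ω hω
        obtain ⟨h1, h2⟩ := hω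
        have h2' : ∀ m ≤ n, 0 < walk ξ k ω m ∧ walk ξ k ω m < L :=
          fun m hm => h2 m (Nat.lt_succ_of_le hm)
        have hxF : walk ξ k ω n ∈ Finset.Ioo (0:ℤ) L :=
          Finset.mem_Ioo.2 (h2' n le_rfl)
        apply Set.mem_biUnion hxF
        refine ⟨⟨h2', rfl⟩, ?_⟩
        show L < 2 * ξ n ω
        have h3 := hwsucc ω n
        have h4 := (h2' n le_rfl).2
        have h5 : 3 * k * 2^rr = 3 * L := by rw [hLdef]; ring
        rw [h5] at h1
        omega
      calc μ (C (n+1)) ≤ μ (⋃ x ∈ (Finset.Ioo (0:ℤ) L : Finset ℤ),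
          ({ω | (∀ m ≤ n, 0 < walk ξ k ω m ∧ walk ξ k ω m < L) ∧ walk ξ k ω n = x}
            ∩ (ξ n) ⁻¹' sL)) := measure_mono hsubset
        _ ≤ ∑ x ∈ Finset.Ioo (0:ℤ) L,
            μ ({ω | (∀ m ≤ n, 0 < walk ξ k ω m ∧ walk ξ k ω m < L) ∧ walk ξ k ω n = x}
              ∩ (ξ n) ⁻¹' sL) := measure_biUnion_finset_le _ _
        _ = ∑ x ∈ Finset.Ioo (0:ℤ) L, ENNReal.ofReal (psi p L n k x) * τ := by
            refine Finset.sum_congr rfl fun x _ => ?_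
            rw [indep_factor μ ξ hmeas hiid k L n x sL,
              nu_eq μ hp0 ξ hmeas hiid hstep k L hk hkL n x, hτn n]
        _ = ENNReal.ofReal (∑ y ∈ Finset.Ioo (0:ℤ) L, psi p L n k y) * τ := by
            rw [← Finset.sum_mul, ← ENNReal.ofReal_sum_of_nonneg
              (fun x _ => psi_nonneg hp0 n k x)]
    have hTOT : ∀ N : Finset ℕ, ∑ n ∈ N, μ (C n)
        ≤ ENNReal.ofReal (2 * (k:ℝ) * (L:ℝ) / p a) * τ := by
      intro N
      obtain ⟨m, hm⟩ : ∃ m, N ⊆ Finset.range (m+1) :=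
        ⟨N.sup id, fun i hi => Finset.mem_range.2 (Nat.lt_succ_of_le (Finset.le_sup (f := id) hi))⟩
      calc ∑ n ∈ N, μ (C n) ≤ ∑ n ∈ Finset.range (m+1), μ (C n) :=
            Finset.sum_le_sum_of_subset hm
        _ = (∑ n ∈ Finset.range m, μ (C (n+1))) + μ (C 0) := Finset.sum_range_succ' _ m
        _ = ∑ n ∈ Finset.range m, μ (C (n+1)) := by rw [hC0, add_zero]
        _ ≤ ∑ n ∈ Finset.range m, ENNReal.ofReal (∑ y ∈ Finset.Ioo (0:ℤ) L, psi p L n k y) * τ :=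
            Finset.sum_le_sum fun n _ => hCsucc n
        _ = (∑ n ∈ Finset.range m, ENNReal.ofReal
              (∑ y ∈ Finset.Ioo (0:ℤ) L, psi p L n k y)) * τ := by
            rw [Finset.sum_mul]
        _ ≤ ENNReal.ofReal (2 * (k:ℝ) * (L:ℝ) / p a) * τ := by
            apply mul_le_mul_left
            rw [← ENNReal.ofReal_sum_of_nonneg (fun n _ => Finset.sum_nonneg
              (fun y _ => psi_nonneg hp0 n k y))]
            apply ENNReal.ofReal_le_ofReal
            rw [le_div_iff₀ hpa, mul_comm]
            exact total_bound hp0 hsymm hsump htsum ha hpa hk hkL m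
    have hτb : τ ≤ ENNReal.ofReal (4 / (L:ℝ)^2 * SS L) := by
      rw [hτ, meas_preimage μ (ξ 0) (hmeas 0) (hstep 0) sL]
      rw [← ENNReal.ofReal_tsum_of_nonneg (fun z => hp0 _) (hsump.subtype _)]
      apply ENNReal.ofReal_le_ofReal
      have hpt : ∀ z : sL, p z ≤ 4 / (L:ℝ)^2 * (((z:ℤ):ℝ)^2 * p z) := by
        intro z
        have hz : L < 2 * (z:ℤ) := z.2
        have hzr : (L:ℝ) < 2 * ((z:ℤ):ℝ) := by exact_mod_cast hz
        have h1 : (L:ℝ)^2 ≤ 4 * ((z:ℤ):ℝ)^2 := by nlinarith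
        have h2 : 0 ≤ p (z:ℤ) := hp0 _
        rw [div_mul_eq_mul_div, le_div_iff₀ (by positivity)]
        nlinarith
      calc ∑' (z : sL), p z ≤ ∑' (z : sL), 4 / (L:ℝ)^2 * (((z:ℤ):ℝ)^2 * p z) :=
            Summable.tsum_le_tsum hpt (hsump.subtype _) ((hmom.subtype _).mul_left _)
        _ = 4 / (L:ℝ)^2 * ∑' (z : sL), ((z:ℤ):ℝ)^2 * p z := tsum_mul_left
        _ = 4 / (L:ℝ)^2 * SS L := by rw [hSS]
    -- combine
    have hmeasE : μ {ω | ∃ n : ℕ, 3 * k * 2^rr < 2 * walk ξ k ω n ∧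
        ∀ m : ℕ, m < n → 0 < walk ξ k ω m ∧ walk ξ k ω m < L}
        ≤ ENNReal.ofReal (2 * (k:ℝ) * (L:ℝ) / p a) * ENNReal.ofReal (4 / (L:ℝ)^2 * SS L) := by
      have hEset : {ω | ∃ n : ℕ, 3 * k * 2^rr < 2 * walk ξ k ω n ∧
          ∀ m : ℕ, m < n → 0 < walk ξ k ω m ∧ walk ξ k ω m < L} = ⋃ n, C n := by
        ext ω
        simp only [hC, Set.mem_setOf_eq, Set.mem_iUnion]
      rw [hEset]
      calc μ (⋃ n, C n) ≤ ∑' n, μ (C n) := measure_iUnion_le C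
        _ ≤ ENNReal.ofReal (2 * (k:ℝ) * (L:ℝ) / p a) * τ := by
            rw [ENNReal.tsum_eq_iSup_sum]
            exact iSup_le hTOT
        _ ≤ ENNReal.ofReal (2 * (k:ℝ) * (L:ℝ) / p a) * ENNReal.ofReal (4 / (L:ℝ)^2 * SS L) :=
            mul_le_mul_right hτb _
    have hbR : (0:ℝ) ≤ 2 * (k:ℝ) * (L:ℝ) / p a := by positivity
    have hbR2 : (0:ℝ) ≤ 4 / (L:ℝ)^2 * SS L := by
      have := hSS_nonneg L
      positivity
    have htoReal : (μ {ω | ∃ n : ℕ, 3 * k * 2^rr < 2 * walk ξ k ω n ∧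
        ∀ m : ℕ, m < n → 0 < walk ξ k ω m ∧ walk ξ k ω m < L}).toReal
        ≤ (2 * (k:ℝ) * (L:ℝ) / p a) * (4 / (L:ℝ)^2 * SS L) := by
      have hprod := hmeasE
      rw [← ENNReal.ofReal_mul hbR] at hprod
      have h1 := ENNReal.toReal_mono ENNReal.ofReal_ne_top hprod
      rw [ENNReal.toReal_ofReal (mul_nonneg hbR hbR2)] at h1
      exact h1
    have hkR : (0:ℝ) < (kk:ℝ) := by exact_mod_cast hkk
    have hfinal : (2:ℝ)^rr * ((2 * (k:ℝ) * (L:ℝ) / p a) * (4 / (L:ℝ)^2 * SS L))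
        = 8 * SS L / p a := by
      have hL' : ((L:ℤ):ℝ) = ((k:ℤ):ℝ) * 2^rr := by rw [hLdef]; push_cast; ring
      have hk0 : ((k:ℤ):ℝ) ≠ 0 := by
        have : (0:ℝ) < ((k:ℤ):ℝ) := by exact_mod_cast hk
        exact ne_of_gt this
      have hpa0 : p a ≠ 0 := ne_of_gt hpa
      have h2p : (2:ℝ)^rr ≠ 0 := by positivity
      rw [hL']
      field_simp
      ring
    calc (2:ℝ)^rr * (μ {ω | ∃ n : ℕ, 3 * k * 2^rr < 2 * walk ξ k ω n ∧
        ∀ m : ℕ, m < n → 0 < walk ξ k ω m ∧ walk ξ k ω m < L}).toReal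
        ≤ (2:ℝ)^rr * ((2 * (k:ℝ) * (L:ℝ) / p a) * (4 / (L:ℝ)^2 * SS L)) := by
          apply mul_le_mul_of_nonneg_left htoReal (by positivity)
      _ = 8 * SS L / p a := hfinal
  -- conclude finiteness
  apply Set.Finite.subset ((Set.finite_Iio M).prod (Set.finite_Iio M))
  rintro ⟨kk, rr⟩ ⟨hkk, hrr, hqε⟩
  have hb := hmain kk rr hkk hrr
  have hL := le_trans hqε hb
  have hnotM : ¬ ((M:ℤ) ≤ (kk:ℤ) * 2^rr) := by
    intro hM'
    have h1 := hMbound _ hM'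
    have h2 : 8 * SS ((kk:ℤ) * 2^rr) / p a < ε := by
      rw [div_lt_iff₀ hpa]
      nlinarith [hSS_nonneg ((kk:ℤ) * 2^rr)]
    linarith
  push_neg at hnotM
  have h2rr : (rr:ℤ) < 2^rr := by exact_mod_cast Nat.lt_two_pow_self (n := rr)
  have hkk1 : (1:ℤ) ≤ (kk:ℤ) := by exact_mod_cast hkk
  have h2rr1 : (1:ℤ) ≤ 2^rr := by
    have := pow_pos (by norm_num : (0:ℤ) < 2) rr
    omega
  constructor
  · show kk < M
    have : (kk:ℤ) < M := by nlinarith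
    exact_mod_cast this
  · show rr < M
    have : (rr:ℤ) < M := by nlinarith
    exact_mod_cast this
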